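/- The formal exponential map pbw : S_A(L) → U(L) is a morphism of coalgebras over A: Δ ∘ pbw = (pbw ⊗ pbw) ∘ Δ, where Δ on U(L) is the standard comultiplication determined by Δ(1)=1⊗1, Δ(X)=1⊗X+X⊗1 for X ∈ L, and multiplicativity, and Δ on S_A(L) is the shuffle comultiplication Δ(X_1⊙⋯⊙X_k) = Σ over (p,q)-shuffles of (X_{σ(1)}⊙⋯⊙X_{σ(p)}) ⊗ (X_{σ(p+1)}⊙⋯⊙X_{σ(k)}). -/

import Mathlib

/-! STATEMENT 9: the formal exponential map `pbw : S_A(L) → U(L)` is a morphism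
of coalgebras over `A`: `Δ ∘ pbw = (pbw ⊗ pbw) ∘ Δ`. -/

noncomputable section

open scoped TensorProduct

def EMap {L U : Type*} [Ring U] [Algebra ℚ U] (j : L → U) (nab : L → L → L) :
    (n : ℕ) → (Fin n → L) → U
  | 0, _ => 1
  | (n + 1), X =>
      (((n : ℚ) + 1)⁻¹) •
        ((∑ k : Fin (n + 1), j (X k) * EMap j nab n (X ∘ k.succAbove)) -
          ∑ k : Fin (n + 1), ∑ m : Fin n,
            EMap j nab n
              (Function.update (X ∘ k.succAbove) m (nab (X k) (X (k.succAbove m)))))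

inductive SymRel (A L : Type*) [CommRing A] [AddCommGroup L] [Module A L] :
    TensorAlgebra A L → TensorAlgebra A L → Prop
  | mk (x y : L) :
      SymRel A L (TensorAlgebra.ι A x * TensorAlgebra.ι A y)
        (TensorAlgebra.ι A y * TensorAlgebra.ι A x)

abbrev SymmAlgebra (A L : Type*) [CommRing A] [AddCommGroup L] [Module A L] :=
  RingQuot (SymRel A L)

def ιSym (A L : Type*) [CommRing A] [AddCommGroup L] [Module A L] :
    L →ₗ[A] SymmAlgebra A L :=
  (RingQuot.mkAlgHom A (SymRel A L)).toLinearMap.comp (TensorAlgebra.ι A)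

def symMonomial (A : Type*) {L : Type*} [CommRing A] [AddCommGroup L] [Module A L]
    (n : ℕ) (X : Fin n → L) : SymmAlgebra A L :=
  (List.ofFn fun i => ιSym A L (X i)).prod

/-- The ordered product of the `j(X_i)`, `i ∈ s`, in `U`. -/
def UProdOn {L U : Type*} [Ring U] (j : L → U) {n : ℕ} (X : Fin n → L)
    (s : Finset (Fin n)) : U :=
  ((s.sort (· ≤ ·)).map fun i => j (X i)).prod

/-- The symmetric monomial `⨀_{i ∈ s} X_i` in `S_A(L)`. -/
def SProdOn (A : Type*) {L : Type*} [CommRing A] [AddCommGroup L] [Module A L]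
    {n : ℕ} (X : Fin n → L) (s : Finset (Fin n)) : SymmAlgebra A L :=
  ((s.sort (· ≤ ·)).map fun i => ιSym A L (X i)).prod

set_option linter.unusedSectionVars false
set_option linter.unusedVariables false
set_option maxHeartbeats 1000000
section Aux
variable {L U : Type*} [Ring U] [Algebra ℚ U] (j : L → U) (nab : L → L → L)

lemma EMap_succ (n : ℕ) (X : Fin (n+1) → L) :
    EMap j nab (n+1) X =
      (((n : ℚ) + 1)⁻¹) •
        ((∑ k : Fin (n + 1), j (X k) * EMap j nab n (X ∘ k.succAbove)) -
          ∑ k : Fin (n + 1), ∑ m : Fin n,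
            EMap j nab n
              (Function.update (X ∘ k.succAbove) m (nab (X k) (X (k.succAbove m))))) := rfl

lemma EMap_succ_nsmul (n : ℕ) (X : Fin (n+1) → L) :
    (n+1) • EMap j nab (n+1) X =
      (∑ k : Fin (n + 1), j (X k) * EMap j nab n (X ∘ k.succAbove)) -
        ∑ k : Fin (n + 1), ∑ m : Fin n,
          EMap j nab n
            (Function.update (X ∘ k.succAbove) m (nab (X k) (X (k.succAbove m)))) := by
  rw [EMap_succ, ← Nat.cast_smul_eq_nsmul ℚ, smul_smul]
  have h : ((n:ℚ)+1) ≠ 0 := by positivity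
  rw [show ((n+1 : ℕ) : ℚ) = (n:ℚ)+1 by push_cast; ring, mul_inv_cancel₀ h, one_smul]

lemma EMap_congr {n n' : ℕ} (h : n = n') (X : Fin n → L) :
    EMap j nab n X = EMap j nab n' (fun i => X (Fin.cast h.symm i)) := by
  subst h; rfl

end Aux

section Aux2
variable {L U : Type*} [Ring U] [Algebra ℚ U] (j : L → U) (nab : L → L → L)

/-- `E` of the restriction of `Z` to the subset `s`. -/
def ElF {N : ℕ} (Z : Fin N → L) (s : Finset (Fin N)) : U :=
  EMap j nab s.card (fun i => Z (s.orderEmbOfFin rfl i))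

lemma ElF_eq {N n : ℕ} (Z : Fin N → L) (s : Finset (Fin N)) (h : s.card = n)
    (g : Fin n → Fin N) (hg : StrictMono g) (hgs : ∀ i, g i ∈ s) :
    ElF j nab Z s = EMap j nab n (fun i => Z (g i)) := by
  have hgeq : g = s.orderEmbOfFin h := Finset.orderEmbOfFin_unique h hgs hg
  rw [ElF, EMap_congr j nab h]
  congr 1
  funext i
  rw [hgeq]
  simp [Finset.orderEmbOfFin_apply]

lemma ElF_empty {N : ℕ} (Z : Fin N → L) : ElF j nab Z (∅ : Finset (Fin N)) = 1 := by
  rw [ElF_eq j nab Z ∅ Finset.card_empty Fin.elim0 (fun i => i.elim0) (fun i => i.elim0)]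
  rfl

lemma ElF_update_of_not_mem {N : ℕ} (Z : Fin N → L) (s : Finset (Fin N)) {m : Fin N}
    (hm : m ∉ s) (v : L) : ElF j nab (Function.update Z m v) s = ElF j nab Z s := by
  unfold ElF
  congr 1
  funext i
  have hne : (s.orderEmbOfFin rfl) i ≠ m := fun h => hm (h ▸ s.orderEmbOfFin_mem rfl i)
  exact Function.update_of_ne hne v Z

lemma ElF_rec {N : ℕ} (Z : Fin N → L) (s : Finset (Fin N)) :
    s.card • ElF j nab Z s =
      (∑ k ∈ s, j (Z k) * ElF j nab Z (s.erase k)) -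
        ∑ k ∈ s, ∑ m ∈ s.erase k,
          ElF j nab (Function.update Z m (nab (Z k) (Z m))) (s.erase k) := by
  rcases Nat.eq_zero_or_eq_succ_pred s.card with h0 | hs
  · have : s = ∅ := Finset.card_eq_zero.mp h0
    subst this
    simp
  · set n := s.card - 1
    have hcard : s.card = n + 1 := hs
    set e : Fin (n+1) ↪o Fin N := s.orderEmbOfFin hcard with he
    have hes : ∀ i, e i ∈ s := fun i => s.orderEmbOfFin_mem hcard i
    have hrange : Set.range e = ↑s := s.range_orderEmbOfFin hcard
    have hElF : ElF j nab Z s = EMap j nab (n+1) (fun i => Z (e i)) :=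
      ElF_eq j nab Z s hcard e e.strictMono hes
    -- the composed enumeration of `s.erase (e k)`
    have hcard' : ∀ k : Fin (n+1), (s.erase (e k)).card = n := by
      intro k; rw [Finset.card_erase_of_mem (hes k), hcard]; omega
    have hgmem : ∀ k : Fin (n+1), ∀ i : Fin n, e (k.succAbove i) ∈ s.erase (e k) := by
      intro k i
      exact Finset.mem_erase.mpr ⟨fun h => Fin.succAbove_ne k i (e.injective h), hes _⟩
    have hgmono : ∀ k : Fin (n+1), StrictMono (fun i => e (k.succAbove i)) := by
      intro k
      exact e.strictMono.comp (Fin.strictMono_succAbove k)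
    have hgsurj : ∀ k : Fin (n+1), ∀ x ∈ s.erase (e k), ∃ i : Fin n, e (k.succAbove i) = x := by
      intro k x hx
      have hxs : x ∈ s := Finset.mem_of_mem_erase hx
      obtain ⟨i', hi'⟩ : ∃ i', e i' = x := by
        have : x ∈ Set.range e := hrange ▸ hxs
        exact this
      have : i' ≠ k := by
        rintro rfl
        exact (Finset.mem_erase.mp hx).1 hi'.symm
      obtain ⟨i, hi⟩ := Fin.exists_succAbove_eq this
      exact ⟨i, by rw [hi, hi']⟩
    have hErase : ∀ k : Fin (n+1),
        EMap j nab n ((fun i => Z (e i)) ∘ k.succAbove) = ElF j nab Z (s.erase (e k)) := by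
      intro k
      exact (ElF_eq j nab Z (s.erase (e k)) (hcard' k) (fun i => e (k.succAbove i))
        (hgmono k) (hgmem k)).symm
    rw [hElF, hcard, EMap_succ_nsmul]
    congr 1
    · -- first sums
      refine Finset.sum_bij (fun (k : Fin (n+1)) (_ : k ∈ Finset.univ) => e k)
        (fun k _ => hes k) (fun k₁ _ k₂ _ h => e.injective h)
        (fun x hx => by
          obtain ⟨i, hi⟩ : ∃ i, e i = x := (hrange ▸ (Finset.mem_coe.mpr hx) : x ∈ Set.range e)
          exact ⟨i, Finset.mem_univ i, hi⟩) ?_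
      intro k _
      rw [hErase k]
    · -- nabla sums
      refine Finset.sum_bij (fun (k : Fin (n+1)) (_ : k ∈ Finset.univ) => e k)
        (fun k _ => hes k) (fun k₁ _ k₂ _ h => e.injective h)
        (fun x hx => by
          obtain ⟨i, hi⟩ : ∃ i, e i = x := (hrange ▸ (Finset.mem_coe.mpr hx) : x ∈ Set.range e)
          exact ⟨i, Finset.mem_univ i, hi⟩) ?_
      intro k _
      refine Finset.sum_bij (fun (m : Fin n) (_ : m ∈ Finset.univ) => e (k.succAbove m))
        (fun m _ => hgmem k m)
        (fun m₁ _ m₂ _ h => (Fin.succAbove_right_injective (p := k)) (e.injective h))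
        (fun x hx => by
          obtain ⟨i, hi⟩ := hgsurj k x hx
          exact ⟨i, Finset.mem_univ i, hi⟩) ?_
      intro m _
      have hupd : (Function.update ((fun i => Z (e i)) ∘ k.succAbove) m
            (nab (Z (e k)) (Z (e (k.succAbove m))))) =
          (fun i => (Function.update Z (e (k.succAbove m)) (nab (Z (e k)) (Z (e (k.succAbove m)))))
            (e (k.succAbove i))) := by
        funext i
        by_cases hi : i = m
        · subst hi; simp
        · rw [Function.update_of_ne hi, Function.update_of_ne
            (fun h => hi ((Fin.succAbove_right_injective (p := k)) (e.injective h)))]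
          rfl
      rw [hupd]
      exact (ElF_eq j nab (Function.update Z (e (k.succAbove m))
          (nab (Z (e k)) (Z (e (k.succAbove m))))) (s.erase (e k)) (hcard' k)
          (fun i => e (k.succAbove i)) (hgmono k) (hgmem k)).symm
end Aux2

section Aux3
variable {m : ℕ}

lemma mem_map_castSucc (t : Finset (Fin m)) (y : Fin m) :
    y.castSucc ∈ t.map Fin.castSuccEmb ↔ y ∈ t :=
  Finset.mem_map' _

lemma last_not_mem_map (t : Finset (Fin m)) :
    Fin.last m ∉ t.map Fin.castSuccEmb := by
  simp only [Finset.mem_map]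
  rintro ⟨y, -, h⟩
  exact Fin.ne_last_of_lt (Fin.castSucc_lt_last y) h

lemma sort_map_castSucc (t : Finset (Fin m)) :
    (t.map Fin.castSuccEmb).sort (· ≤ ·) = (t.sort (· ≤ ·)).map Fin.castSucc := by
  refine (fun h1 h2 h3 => List.Perm.eq_of_pairwise' (r := (· ≤ ·)) h2 h3 h1) ?_ ?_ ?_
  · rw [← Multiset.coe_eq_coe, Finset.sort_eq, Finset.map_val, ← Multiset.map_coe,
      Finset.sort_eq]
    rfl
  · exact Finset.pairwise_sort _ _
  · rw [List.pairwise_map]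
    exact (Finset.pairwise_sort t _).imp fun h => Fin.castSucc_le_castSucc_iff.mpr h

lemma sort_insert_last (u : Finset (Fin (m+1))) (hu : Fin.last m ∉ u) :
    (insert (Fin.last m) u).sort (· ≤ ·) = u.sort (· ≤ ·) ++ [Fin.last m] := by
  refine (fun h1 h2 h3 => List.Perm.eq_of_pairwise' (r := (· ≤ ·)) h2 h3 h1) ?_ ?_ ?_
  · rw [← Multiset.coe_eq_coe, Finset.sort_eq, Finset.insert_val_of_notMem hu]
    show (Fin.last m) ::ₘ u.val
        = (↑(u.sort (· ≤ ·)) + ({Fin.last m} : Multiset (Fin (m+1))))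
    rw [Finset.sort_eq]
    have h2 := Multiset.singleton_add (Fin.last m) u.val
    rw [← h2]
    exact add_comm _ _
  · exact Finset.pairwise_sort _ _
  · rw [List.pairwise_append]
    refine ⟨Finset.pairwise_sort _ _, List.pairwise_singleton _ _, ?_⟩
    intro x _ y hy
    rw [List.mem_singleton] at hy
    subst hy
    exact Fin.le_last x

variable {L U : Type*} [Ring U] (j : L → U)

lemma UProdOn_map_castSucc (Y : Fin m → L) (w : L) (t : Finset (Fin m)) :
    UProdOn j (Fin.snoc Y w) (t.map Fin.castSuccEmb) = UProdOn j Y t := by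
  unfold UProdOn
  rw [sort_map_castSucc, List.map_map]
  congr 1
  apply List.map_congr_left
  intro i _
  simp [Fin.snoc_castSucc]

lemma UProdOn_insert_last (Y : Fin m → L) (w : L) (t : Finset (Fin m)) :
    UProdOn j (Fin.snoc Y w) (insert (Fin.last m) (t.map Fin.castSuccEmb)) =
      UProdOn j Y t * j w := by
  unfold UProdOn
  rw [sort_insert_last _ (last_not_mem_map t), List.map_append, List.prod_append,
    sort_map_castSucc, List.map_map]
  congr 2
  · apply List.map_congr_left
    intro i _
    simp [Fin.snoc_castSucc]
  · simp [Fin.snoc_last]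

lemma compl_map_castSucc (t : Finset (Fin m)) :
    (t.map Fin.castSuccEmb)ᶜ = insert (Fin.last m) (tᶜ.map Fin.castSuccEmb) := by
  ext x
  induction x using Fin.lastCases with
  | last => simp [last_not_mem_map t]
  | cast y =>
    have hne : Fin.castSucc y ≠ Fin.last m := Fin.ne_last_of_lt (Fin.castSucc_lt_last y)
    rw [Finset.mem_compl, mem_map_castSucc, Finset.mem_insert, mem_map_castSucc,
      Finset.mem_compl]
    simp [hne]

lemma compl_insert_last (t : Finset (Fin m)) :
    (insert (Fin.last m) (t.map Fin.castSuccEmb))ᶜ = tᶜ.map Fin.castSuccEmb := by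
  rw [Finset.compl_insert, compl_map_castSucc, Finset.erase_insert (last_not_mem_map tᶜ)]

lemma sum_split_last {M : Type*} [AddCommMonoid M] (g : Finset (Fin (m+1)) → M) :
    ∑ t' : Finset (Fin (m+1)), g t' =
      ∑ t : Finset (Fin m),
        (g (t.map Fin.castSuccEmb) + g (insert (Fin.last m) (t.map Fin.castSuccEmb))) := by
  rw [Finset.sum_add_distrib,
    ← Finset.sum_filter_add_sum_filter_not Finset.univ (fun t' => Fin.last m ∉ t') g]
  congr 1
  · refine (Finset.sum_nbij' (i := fun t : Finset (Fin m) => t.map Fin.castSuccEmb)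
      (j := fun t' : Finset (Fin (m+1)) =>
        t'.preimage Fin.castSucc (Fin.castSucc_injective m).injOn) ?_ ?_ ?_ ?_ ?_).symm
    · intro t _
      simp only [Finset.mem_filter, Finset.mem_univ, true_and]
      exact last_not_mem_map t
    · intro t' _; exact Finset.mem_univ _
    · intro t _
      ext y
      rw [Finset.mem_preimage, mem_map_castSucc]
    · intro t' ht'
      simp only [Finset.mem_filter, Finset.mem_univ, true_and] at ht'
      ext x
      induction x using Fin.lastCases with
      | last => exact iff_of_false (last_not_mem_map _) ht'
      | cast y => rw [mem_map_castSucc, Finset.mem_preimage]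
    · intro t' ht'
      rfl
  · refine (Finset.sum_nbij' (i := fun t : Finset (Fin m) =>
        insert (Fin.last m) (t.map Fin.castSuccEmb))
      (j := fun t' : Finset (Fin (m+1)) =>
        (t'.erase (Fin.last m)).preimage Fin.castSucc (Fin.castSucc_injective m).injOn)
        ?_ ?_ ?_ ?_ ?_).symm
    · intro t _
      simp only [Finset.mem_filter, Finset.mem_univ, true_and, not_not]
      exact Finset.mem_insert_self _ _
    · intro t' _; exact Finset.mem_univ _
    · intro t _
      ext y
      have hne : Fin.castSucc y ≠ Fin.last m := Fin.ne_last_of_lt (Fin.castSucc_lt_last y)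
      rw [Finset.mem_preimage, Finset.mem_erase, Finset.mem_insert, mem_map_castSucc]
      simp [hne]
    · intro t' ht'
      simp only [Finset.mem_filter, Finset.mem_univ, true_and, not_not] at ht'
      ext x
      induction x using Fin.lastCases with
      | last => simp [ht']
      | cast y =>
        have hne : Fin.castSucc y ≠ Fin.last m := Fin.ne_last_of_lt (Fin.castSucc_lt_last y)
        rw [Finset.mem_insert, mem_map_castSucc, Finset.mem_preimage, Finset.mem_erase]
        simp [hne]
    · intro t' ht'
      rfl

lemma rei1 {α M : Type*} [DecidableEq α] [AddCommMonoid M] (s₀ : Finset α)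
    (f : α → Finset α → M) :
    ∑ s' ∈ s₀.powerset, ∑ k ∈ s', f k s' =
      ∑ k ∈ s₀, ∑ s ∈ (s₀.erase k).powerset, f k (insert k s) := by
  rw [Finset.sum_sigma', Finset.sum_sigma']
  refine Finset.sum_nbij' (i := fun x => (⟨x.2, x.1.erase x.2⟩ : (_ : α) × Finset α))
    (j := fun x => (⟨insert x.1 x.2, x.1⟩ : (_ : Finset α) × α)) ?_ ?_ ?_ ?_ ?_
  · rintro ⟨s', k⟩ hx
    rw [Finset.mem_sigma] at hx ⊢
    obtain ⟨hs', hk⟩ := hx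
    rw [Finset.mem_powerset] at hs'
    exact ⟨hs' hk, Finset.mem_powerset.mpr (Finset.erase_subset_erase _ hs')⟩
  · rintro ⟨k, s⟩ hx
    rw [Finset.mem_sigma] at hx ⊢
    obtain ⟨hk, hs⟩ := hx
    rw [Finset.mem_powerset, Finset.subset_erase] at hs
    refine ⟨Finset.mem_powerset.mpr ?_, Finset.mem_insert_self _ _⟩
    exact Finset.insert_subset hk hs.1
  · rintro ⟨s', k⟩ hx
    rw [Finset.mem_sigma] at hx
    simp only
    congr 1
    exact Finset.insert_erase hx.2
  · rintro ⟨k, s⟩ hx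
    rw [Finset.mem_sigma] at hx
    obtain ⟨hk, hs⟩ := hx
    rw [Finset.mem_powerset, Finset.subset_erase] at hs
    simp only
    congr 1
    exact Finset.erase_insert hs.2
  · rintro ⟨s', k⟩ hx
    rw [Finset.mem_sigma] at hx
    simp only
    rw [Finset.insert_erase hx.2]

lemma rei2 {α M : Type*} [DecidableEq α] [AddCommMonoid M] (s₀ : Finset α)
    (f : α → Finset α → M) :
    ∑ s' ∈ s₀.powerset, ∑ k ∈ s₀ \ s', f k s' =
      ∑ k ∈ s₀, ∑ s ∈ (s₀.erase k).powerset, f k s := by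
  rw [Finset.sum_sigma', Finset.sum_sigma']
  refine Finset.sum_nbij' (i := fun x => (⟨x.2, x.1⟩ : (_ : α) × Finset α))
    (j := fun x => (⟨x.2, x.1⟩ : (_ : Finset α) × α)) ?_ ?_ ?_ ?_ ?_
  · rintro ⟨s', k⟩ hx
    rw [Finset.mem_sigma] at hx ⊢
    obtain ⟨hs', hk⟩ := hx
    rw [Finset.mem_powerset] at hs'
    rw [Finset.mem_sdiff] at hk
    exact ⟨hk.1, Finset.mem_powerset.mpr (Finset.subset_erase.mpr ⟨hs', hk.2⟩)⟩
  · rintro ⟨k, s⟩ hx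
    rw [Finset.mem_sigma] at hx ⊢
    obtain ⟨hk, hs⟩ := hx
    rw [Finset.mem_powerset, Finset.subset_erase] at hs
    exact ⟨Finset.mem_powerset.mpr hs.1, Finset.mem_sdiff.mpr ⟨hk, hs.2⟩⟩
  · rintro ⟨s', k⟩ _; rfl
  · rintro ⟨k, s⟩ _; rfl
  · rintro ⟨s', k⟩ _; rfl

end Aux3

section KeyAux
variable {A L U : Type*} [CommRing A] [Algebra ℚ A]
    [AddCommGroup L] [Module A L]
    [Ring U] [Algebra ℚ U] [Module A U]

lemma tmul_nsmul_comm [SMulCommClass A ℚ U] (c : ℕ) (x y : U) :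
    (c • x) ⊗ₜ[A] y = x ⊗ₜ[A] (c • y) := by
  have h1 := ((TensorProduct.mk A U U).flip y).toAddMonoidHom.map_nsmul c x
  have h2 := ((TensorProduct.mk A U U) x).toAddMonoidHom.map_nsmul c y
  simp only [LinearMap.toAddMonoidHom_coe, LinearMap.flip_apply, TensorProduct.mk_apply] at h1 h2
  rw [h1, h2]

lemma nsmul_tmul_left [SMulCommClass A ℚ U] (c : ℕ) (x y : U) :
    (c • x) ⊗ₜ[A] y = c • (x ⊗ₜ[A] y) := by
  have h1 := ((TensorProduct.mk A U U).flip y).toAddMonoidHom.map_nsmul c x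
  simpa using h1

lemma ofFn_snoc_prod {m : ℕ} (j : L → U) (Y : Fin m → L) (w : L) :
    (List.ofFn fun i : Fin (m+1) => j ((Fin.snoc Y w : Fin (m+1) → L) i)).prod =
      (List.ofFn fun i => j (Y i)).prod * j w := by
  rw [List.ofFn_succ']
  rw [List.concat_eq_append, List.prod_append]
  simp [Fin.snoc_castSucc, Fin.snoc_last]

lemma sd_erase {α : Type*} [DecidableEq α] (s₀ s : Finset α) (k : α) :
    (s₀ \ s).erase k = (s₀.erase k) \ s := by
  ext x
  simp only [Finset.mem_erase, Finset.mem_sdiff]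
  tauto

lemma sdiff_insert_eq {α : Type*} [DecidableEq α] (s₀ s : Finset α) (k : α) :
    s₀ \ insert k s = (s₀.erase k) \ s := by
  rw [Finset.sdiff_insert, sd_erase]

variable [SMulCommClass A ℚ U] (j : L → U) (nab : L → L → L)
    (ΔU : U →ₗ[A] U ⊗[A] U)
    (hΔUprod : ∀ (n : ℕ) (X : Fin n → L),
        ΔU ((List.ofFn fun i => j (X i)).prod) =
          ∑ s : Finset (Fin n), UProdOn j X s ⊗ₜ[A] UProdOn j X sᶜ)

include hΔUprod in
lemma key : ∀ (p : ℕ) {N : ℕ} (Z : Fin N → L) (s₀ : Finset (Fin N)),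
    s₀.card = p → ∀ (m : ℕ) (Y : Fin m → L),
    ΔU ((List.ofFn fun i => j (Y i)).prod * ElF j nab Z s₀) =
      ∑ t : Finset (Fin m), ∑ s ∈ s₀.powerset,
        (UProdOn j Y t * ElF j nab Z s) ⊗ₜ[A]
          (UProdOn j Y tᶜ * ElF j nab Z (s₀ \ s)) := by
  intro p
  induction p with
  | zero =>
    intro N Z s₀ hcard m Y
    have hs : s₀ = ∅ := Finset.card_eq_zero.mp hcard
    subst hs
    rw [ElF_empty, mul_one, Finset.powerset_empty, hΔUprod m Y]
    simp [ElF_empty, Finset.sdiff_empty]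
  | succ n IH =>
    intro N Z s₀ hcard m Y
    have hq : ((n : ℚ) + 1) ≠ 0 := by positivity
    -- injectivity of scalar multiplication
    have hinj : ∀ x y : U ⊗[A] U, ((n:ℚ)+1) • x = ((n:ℚ)+1) • y → x = y := by
      intro x y h
      have h2 := congrArg (fun z => (((n:ℚ)+1)⁻¹) • z) h
      simpa [smul_smul, inv_mul_cancel₀ hq] using h2
    apply hinj
    have hcast : ∀ x : U, ((n:ℚ)+1) • x = (n+1) • x := by
      intro x
      rw [show ((n:ℚ)+1) = ((n+1 : ℕ) : ℚ) by push_cast; ring, Nat.cast_smul_eq_nsmul]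
    have hrec : (n+1) • ElF j nab Z s₀ =
        (∑ k ∈ s₀, j (Z k) * ElF j nab Z (s₀.erase k)) -
          ∑ k ∈ s₀, ∑ m' ∈ s₀.erase k,
            ElF j nab (Function.update Z m' (nab (Z k) (Z m'))) (s₀.erase k) := by
      rw [← hcard]; exact ElF_rec j nab Z s₀
    -- LHS transformation
    have hLHS : ((n:ℚ)+1) • ΔU ((List.ofFn fun i => j (Y i)).prod * ElF j nab Z s₀) =
        ΔU ((List.ofFn fun i => j (Y i)).prod *
          ((∑ k ∈ s₀, j (Z k) * ElF j nab Z (s₀.erase k)) -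
            ∑ k ∈ s₀, ∑ m' ∈ s₀.erase k,
              ElF j nab (Function.update Z m' (nab (Z k) (Z m'))) (s₀.erase k))) := by
      rw [← hrec, ← hcast, ← map_rat_smul ΔU, mul_smul_comm]
    rw [hLHS]
    -- canonical form pieces
    have hcardk : ∀ k ∈ s₀, (s₀.erase k).card = n := by
      intro k hk; rw [Finset.card_erase_of_mem hk, hcard]; omega
    -- part A
    have hA : ∀ k ∈ s₀,
        ΔU ((List.ofFn fun i => j (Y i)).prod * (j (Z k) * ElF j nab Z (s₀.erase k))) =
        ∑ t : Finset (Fin m), ∑ s ∈ (s₀.erase k).powerset,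
          ((UProdOn j Y t * ElF j nab Z s) ⊗ₜ[A]
              (UProdOn j Y tᶜ * (j (Z k) * ElF j nab Z ((s₀.erase k) \ s)))
            + (UProdOn j Y t * (j (Z k) * ElF j nab Z s)) ⊗ₜ[A]
              (UProdOn j Y tᶜ * ElF j nab Z ((s₀.erase k) \ s))) := by
      intro k hk
      rw [← mul_assoc, ← ofFn_snoc_prod j Y (Z k),
        IH Z (s₀.erase k) (hcardk k hk) (m+1) (Fin.snoc Y (Z k) : Fin (m+1) → L),
        sum_split_last]
      simp only [UProdOn_map_castSucc, compl_map_castSucc, UProdOn_insert_last,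
        compl_insert_last, mul_assoc, ← Finset.sum_add_distrib]
    -- part B
    have hB : ∀ k ∈ s₀, ∀ m' ∈ s₀.erase k,
        ΔU ((List.ofFn fun i => j (Y i)).prod *
            ElF j nab (Function.update Z m' (nab (Z k) (Z m'))) (s₀.erase k)) =
        ∑ t : Finset (Fin m), ∑ s ∈ (s₀.erase k).powerset,
          (UProdOn j Y t * ElF j nab (Function.update Z m' (nab (Z k) (Z m'))) s) ⊗ₜ[A]
            (UProdOn j Y tᶜ *
              ElF j nab (Function.update Z m' (nab (Z k) (Z m'))) ((s₀.erase k) \ s)) :=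
      fun k hk m' _ => IH _ (s₀.erase k) (hcardk k hk) m Y
    -- B-sum reorganization
    have hBsum : ∀ k ∈ s₀,
        (∑ m' ∈ s₀.erase k, ∑ t : Finset (Fin m), ∑ s ∈ (s₀.erase k).powerset,
          (UProdOn j Y t * ElF j nab (Function.update Z m' (nab (Z k) (Z m'))) s) ⊗ₜ[A]
            (UProdOn j Y tᶜ *
              ElF j nab (Function.update Z m' (nab (Z k) (Z m'))) ((s₀.erase k) \ s))) =
        ∑ t : Finset (Fin m), ∑ s ∈ (s₀.erase k).powerset,
          ((∑ m' ∈ (s₀.erase k) \ s,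
              (UProdOn j Y t * ElF j nab Z s) ⊗ₜ[A]
                (UProdOn j Y tᶜ *
                  ElF j nab (Function.update Z m' (nab (Z k) (Z m'))) ((s₀.erase k) \ s)))
            + ∑ m' ∈ s,
              (UProdOn j Y t * ElF j nab (Function.update Z m' (nab (Z k) (Z m'))) s) ⊗ₜ[A]
                (UProdOn j Y tᶜ * ElF j nab Z ((s₀.erase k) \ s))) := by
      intro k hk
      rw [Finset.sum_comm]
      refine Finset.sum_congr rfl ?_
      intro t _
      rw [Finset.sum_comm]
      refine Finset.sum_congr rfl ?_
      intro s hs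
      have hsub : s ⊆ s₀.erase k := Finset.mem_powerset.mp hs
      rw [← Finset.sum_sdiff hsub]
      congr 1
      · refine Finset.sum_congr rfl ?_
        intro m' hm'
        rw [ElF_update_of_not_mem j nab Z s (Finset.mem_sdiff.mp hm').2]
      · refine Finset.sum_congr rfl ?_
        intro m' hm'
        have hnm : m' ∉ (s₀.erase k) \ s := fun h => (Finset.mem_sdiff.mp h).2 hm'
        rw [ElF_update_of_not_mem j nab Z _ hnm]
    -- LHS in canonical form
    have hL2 : ΔU ((List.ofFn fun i => j (Y i)).prod *
        ((∑ k ∈ s₀, j (Z k) * ElF j nab Z (s₀.erase k)) -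
          ∑ k ∈ s₀, ∑ m' ∈ s₀.erase k,
            ElF j nab (Function.update Z m' (nab (Z k) (Z m'))) (s₀.erase k))) =
        ((∑ k ∈ s₀, ∑ t : Finset (Fin m), ∑ s ∈ (s₀.erase k).powerset,
          (UProdOn j Y t * ElF j nab Z s) ⊗ₜ[A]
            (UProdOn j Y tᶜ * (j (Z k) * ElF j nab Z ((s₀.erase k) \ s))))
         + ∑ k ∈ s₀, ∑ t : Finset (Fin m), ∑ s ∈ (s₀.erase k).powerset,
          (UProdOn j Y t * (j (Z k) * ElF j nab Z s)) ⊗ₜ[A]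
            (UProdOn j Y tᶜ * ElF j nab Z ((s₀.erase k) \ s)))
        - ((∑ k ∈ s₀, ∑ t : Finset (Fin m), ∑ s ∈ (s₀.erase k).powerset,
            ∑ m' ∈ (s₀.erase k) \ s,
              (UProdOn j Y t * ElF j nab Z s) ⊗ₜ[A]
                (UProdOn j Y tᶜ *
                  ElF j nab (Function.update Z m' (nab (Z k) (Z m'))) ((s₀.erase k) \ s)))
           + ∑ k ∈ s₀, ∑ t : Finset (Fin m), ∑ s ∈ (s₀.erase k).powerset,
            ∑ m' ∈ s,
              (UProdOn j Y t * ElF j nab (Function.update Z m' (nab (Z k) (Z m'))) s) ⊗ₜ[A]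
                (UProdOn j Y tᶜ * ElF j nab Z ((s₀.erase k) \ s))) := by
      rw [mul_sub, map_sub]
      congr 1
      · rw [Finset.mul_sum, map_sum, Finset.sum_congr rfl hA]
        simp only [Finset.sum_add_distrib]
      · simp only [Finset.mul_sum, map_sum]
        rw [Finset.sum_congr rfl (fun k hk => Finset.sum_congr rfl (hB k hk)),
          Finset.sum_congr rfl hBsum]
        simp only [Finset.sum_add_distrib]
    rw [hL2]
    -- RHS expansion
    have hterm : ∀ (t : Finset (Fin m)), ∀ s' ∈ s₀.powerset,
        ((n:ℚ)+1) • ((UProdOn j Y t * ElF j nab Z s') ⊗ₜ[A]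
            (UProdOn j Y tᶜ * ElF j nab Z (s₀ \ s'))) =
        ((∑ k ∈ s₀ \ s',
            (UProdOn j Y t * ElF j nab Z s') ⊗ₜ[A]
              (UProdOn j Y tᶜ * (j (Z k) * ElF j nab Z ((s₀ \ s').erase k))))
          - ∑ k ∈ s₀ \ s', ∑ m' ∈ (s₀ \ s').erase k,
            (UProdOn j Y t * ElF j nab Z s') ⊗ₜ[A]
              (UProdOn j Y tᶜ *
                ElF j nab (Function.update Z m' (nab (Z k) (Z m'))) ((s₀ \ s').erase k)))
        + ((∑ k ∈ s',
            (UProdOn j Y t * (j (Z k) * ElF j nab Z (s'.erase k))) ⊗ₜ[A]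
              (UProdOn j Y tᶜ * ElF j nab Z (s₀ \ s')))
          - ∑ k ∈ s', ∑ m' ∈ s'.erase k,
            (UProdOn j Y t * ElF j nab (Function.update Z m' (nab (Z k) (Z m'))) (s'.erase k)) ⊗ₜ[A]
              (UProdOn j Y tᶜ * ElF j nab Z (s₀ \ s'))) := by
      intro t s' hs'
      have hsub : s' ⊆ s₀ := Finset.mem_powerset.mp hs'
      have hcards : (s₀ \ s').card + s'.card = n + 1 := by
        rw [Finset.card_sdiff_add_card_eq_card hsub, hcard]
      rw [show ((n:ℚ)+1) = ((n+1 : ℕ) : ℚ) by push_cast; ring, Nat.cast_smul_eq_nsmul,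
        ← hcards, add_nsmul]
      congr 1
      · rw [← nsmul_tmul_left, tmul_nsmul_comm, ← mul_smul_comm, ElF_rec j nab Z (s₀ \ s'),
          mul_sub, TensorProduct.tmul_sub, Finset.mul_sum, TensorProduct.tmul_sum]
        congr 1
        simp only [Finset.mul_sum, TensorProduct.tmul_sum]
      · rw [← nsmul_tmul_left, ← mul_smul_comm, ElF_rec j nab Z s',
          mul_sub, TensorProduct.sub_tmul, Finset.mul_sum, TensorProduct.sum_tmul]
        congr 1
        simp only [Finset.mul_sum, TensorProduct.sum_tmul]
    -- the four reindexed sums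
    have hE3 : ∀ t : Finset (Fin m),
        (∑ s' ∈ s₀.powerset, ∑ k ∈ s₀ \ s',
          (UProdOn j Y t * ElF j nab Z s') ⊗ₜ[A]
            (UProdOn j Y tᶜ * (j (Z k) * ElF j nab Z ((s₀ \ s').erase k)))) =
        ∑ k ∈ s₀, ∑ s ∈ (s₀.erase k).powerset,
          (UProdOn j Y t * ElF j nab Z s) ⊗ₜ[A]
            (UProdOn j Y tᶜ * (j (Z k) * ElF j nab Z ((s₀.erase k) \ s))) := by
      intro t
      rw [rei2 s₀ (fun k s' => (UProdOn j Y t * ElF j nab Z s') ⊗ₜ[A]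
        (UProdOn j Y tᶜ * (j (Z k) * ElF j nab Z ((s₀ \ s').erase k))))]
      simp only [sd_erase]
    have hE4 : ∀ t : Finset (Fin m),
        (∑ s' ∈ s₀.powerset, ∑ k ∈ s₀ \ s', ∑ m' ∈ (s₀ \ s').erase k,
          (UProdOn j Y t * ElF j nab Z s') ⊗ₜ[A]
            (UProdOn j Y tᶜ *
              ElF j nab (Function.update Z m' (nab (Z k) (Z m'))) ((s₀ \ s').erase k))) =
        ∑ k ∈ s₀, ∑ s ∈ (s₀.erase k).powerset, ∑ m' ∈ (s₀.erase k) \ s,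
          (UProdOn j Y t * ElF j nab Z s) ⊗ₜ[A]
            (UProdOn j Y tᶜ *
              ElF j nab (Function.update Z m' (nab (Z k) (Z m'))) ((s₀.erase k) \ s)) := by
      intro t
      rw [rei2 s₀ (fun k s' => ∑ m' ∈ (s₀ \ s').erase k,
        (UProdOn j Y t * ElF j nab Z s') ⊗ₜ[A]
          (UProdOn j Y tᶜ *
            ElF j nab (Function.update Z m' (nab (Z k) (Z m'))) ((s₀ \ s').erase k)))]
      simp only [sd_erase]
    have hE1 : ∀ t : Finset (Fin m),
        (∑ s' ∈ s₀.powerset, ∑ k ∈ s',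
          (UProdOn j Y t * (j (Z k) * ElF j nab Z (s'.erase k))) ⊗ₜ[A]
            (UProdOn j Y tᶜ * ElF j nab Z (s₀ \ s'))) =
        ∑ k ∈ s₀, ∑ s ∈ (s₀.erase k).powerset,
          (UProdOn j Y t * (j (Z k) * ElF j nab Z s)) ⊗ₜ[A]
            (UProdOn j Y tᶜ * ElF j nab Z ((s₀.erase k) \ s)) := by
      intro t
      rw [rei1 s₀ (fun k s' => (UProdOn j Y t * (j (Z k) * ElF j nab Z (s'.erase k))) ⊗ₜ[A]
        (UProdOn j Y tᶜ * ElF j nab Z (s₀ \ s')))]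
      refine Finset.sum_congr rfl ?_
      intro k _
      refine Finset.sum_congr rfl ?_
      intro s hs
      have hks : k ∉ s := (Finset.subset_erase.mp (Finset.mem_powerset.mp hs)).2
      rw [Finset.erase_insert hks, sdiff_insert_eq]
    have hE2 : ∀ t : Finset (Fin m),
        (∑ s' ∈ s₀.powerset, ∑ k ∈ s', ∑ m' ∈ s'.erase k,
          (UProdOn j Y t *
            ElF j nab (Function.update Z m' (nab (Z k) (Z m'))) (s'.erase k)) ⊗ₜ[A]
            (UProdOn j Y tᶜ * ElF j nab Z (s₀ \ s'))) =
        ∑ k ∈ s₀, ∑ s ∈ (s₀.erase k).powerset, ∑ m' ∈ s,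
          (UProdOn j Y t *
            ElF j nab (Function.update Z m' (nab (Z k) (Z m'))) s) ⊗ₜ[A]
            (UProdOn j Y tᶜ * ElF j nab Z ((s₀.erase k) \ s)) := by
      intro t
      rw [rei1 s₀ (fun k s' => ∑ m' ∈ s'.erase k,
        (UProdOn j Y t *
          ElF j nab (Function.update Z m' (nab (Z k) (Z m'))) (s'.erase k)) ⊗ₜ[A]
          (UProdOn j Y tᶜ * ElF j nab Z (s₀ \ s')))]
      refine Finset.sum_congr rfl ?_
      intro k _
      refine Finset.sum_congr rfl ?_
      intro s hs
      have hks : k ∉ s := (Finset.subset_erase.mp (Finset.mem_powerset.mp hs)).2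
      rw [Finset.erase_insert hks, sdiff_insert_eq]
    -- assemble RHS
    have hRHS : ((n:ℚ)+1) • (∑ t : Finset (Fin m), ∑ s ∈ s₀.powerset,
        (UProdOn j Y t * ElF j nab Z s) ⊗ₜ[A]
          (UProdOn j Y tᶜ * ElF j nab Z (s₀ \ s))) =
        ((∑ k ∈ s₀, ∑ t : Finset (Fin m), ∑ s ∈ (s₀.erase k).powerset,
          (UProdOn j Y t * ElF j nab Z s) ⊗ₜ[A]
            (UProdOn j Y tᶜ * (j (Z k) * ElF j nab Z ((s₀.erase k) \ s))))
         - ∑ k ∈ s₀, ∑ t : Finset (Fin m), ∑ s ∈ (s₀.erase k).powerset,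
            ∑ m' ∈ (s₀.erase k) \ s,
              (UProdOn j Y t * ElF j nab Z s) ⊗ₜ[A]
                (UProdOn j Y tᶜ *
                  ElF j nab (Function.update Z m' (nab (Z k) (Z m'))) ((s₀.erase k) \ s)))
        + ((∑ k ∈ s₀, ∑ t : Finset (Fin m), ∑ s ∈ (s₀.erase k).powerset,
          (UProdOn j Y t * (j (Z k) * ElF j nab Z s)) ⊗ₜ[A]
            (UProdOn j Y tᶜ * ElF j nab Z ((s₀.erase k) \ s)))
         - ∑ k ∈ s₀, ∑ t : Finset (Fin m), ∑ s ∈ (s₀.erase k).powerset,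
            ∑ m' ∈ s,
              (UProdOn j Y t * ElF j nab (Function.update Z m' (nab (Z k) (Z m'))) s) ⊗ₜ[A]
                (UProdOn j Y tᶜ * ElF j nab Z ((s₀.erase k) \ s))) := by
      rw [Finset.smul_sum]
      rw [Finset.sum_congr rfl (fun t _ => Finset.smul_sum)]
      rw [Finset.sum_congr rfl (fun t _ => Finset.sum_congr rfl (hterm t))]
      simp only [Finset.sum_add_distrib, Finset.sum_sub_distrib]
      rw [Finset.sum_congr rfl (fun t _ => hE3 t), Finset.sum_congr rfl (fun t _ => hE4 t),
        Finset.sum_congr rfl (fun t _ => hE1 t), Finset.sum_congr rfl (fun t _ => hE2 t)]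
      rw [Finset.sum_comm (s := Finset.univ) (t := s₀), Finset.sum_comm (s := Finset.univ) (t := s₀),
        Finset.sum_comm (s := Finset.univ) (t := s₀), Finset.sum_comm (s := Finset.univ) (t := s₀)]
    rw [hRHS]
    abel


end KeyAux

section Final

variable {A L : Type*} [CommRing A] [AddCommGroup L] [Module A L]

lemma symMonomial_mul (p q : ℕ) (Xp : Fin p → L) (Xq : Fin q → L) :
    symMonomial A p Xp * symMonomial A q Xq =
      symMonomial A (p+q) (Fin.append Xp Xq) := by
  unfold symMonomial
  rw [← List.prod_append, List.ofFn_add]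
  congr 1 <;> simp [Fin.append_left, Fin.append_right]

lemma span_symMonomial :
    Submodule.span A {x : SymmAlgebra A L | ∃ (n : ℕ) (X : Fin n → L), x = symMonomial A n X}
      = ⊤ := by
  rw [eq_top_iff]
  rintro x -
  obtain ⟨y, rfl⟩ := RingQuot.mkAlgHom_surjective A (SymRel A L) x
  induction y using TensorAlgebra.induction with
  | algebraMap r =>
    rw [AlgHom.commutes, Algebra.algebraMap_eq_smul_one]
    refine Submodule.smul_mem _ r (Submodule.subset_span ⟨0, Fin.elim0, ?_⟩)
    unfold symMonomial
    rw [List.ofFn_zero, List.prod_nil]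
  | ι x =>
    refine Submodule.subset_span ⟨1, fun _ => x, ?_⟩
    unfold symMonomial
    rw [List.ofFn_succ, List.ofFn_zero, List.prod_cons, List.prod_nil, mul_one]
    rfl
  | mul a b ha hb =>
    rw [map_mul]
    have Hmul : ∀ u ∈ Submodule.span A
        {x : SymmAlgebra A L | ∃ (n : ℕ) (X : Fin n → L), x = symMonomial A n X},
        ∀ v ∈ Submodule.span A
        {x : SymmAlgebra A L | ∃ (n : ℕ) (X : Fin n → L), x = symMonomial A n X},
        u * v ∈ Submodule.span A
        {x : SymmAlgebra A L | ∃ (n : ℕ) (X : Fin n → L), x = symMonomial A n X} := by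
      intro u hu
      refine Submodule.span_induction ?_ ?_ ?_ ?_ hu
      · rintro x ⟨p, Xp, rfl⟩ v hv
        refine Submodule.span_induction ?_ ?_ ?_ ?_ hv
        · rintro w ⟨q, Xq, rfl⟩
          exact Submodule.subset_span ⟨p + q, Fin.append Xp Xq, symMonomial_mul p q Xp Xq⟩
        · rw [mul_zero]; exact Submodule.zero_mem _
        · intro w₁ w₂ _ _ h1 h2
          rw [mul_add]; exact Submodule.add_mem _ h1 h2
        · intro c w _ hw
          rw [mul_smul_comm]; exact Submodule.smul_mem _ c hw
      · intro v hv; rw [zero_mul]; exact Submodule.zero_mem _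
      · intro u₁ u₂ _ _ h1 h2 v hv
        rw [add_mul]; exact Submodule.add_mem _ (h1 v hv) (h2 v hv)
      · intro c w _ hw v hv
        rw [smul_mul_assoc]; exact Submodule.smul_mem _ c (hw v hv)
    exact Hmul _ ha _ hb
  | add a b ha hb =>
    rw [map_add]
    exact Submodule.add_mem _ ha hb

lemma sort_eq_ofFn {α : Type*} [LinearOrder α] (s : Finset α) :
    s.sort (· ≤ ·) = List.ofFn (fun i : Fin s.card => s.orderEmbOfFin rfl i) := by
  apply List.ext_getElem
  · rw [Finset.length_sort, List.length_ofFn]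
  · intro i h1 h2
    rw [List.getElem_ofFn]
    exact (Finset.orderEmbOfFin_apply s rfl
      ⟨i, by rw [Finset.length_sort] at h1; exact h1⟩).symm

lemma SProdOn_eq_symMonomial {n : ℕ} (X : Fin n → L) (s : Finset (Fin n)) :
    SProdOn A X s = symMonomial A s.card (fun i => X (s.orderEmbOfFin rfl i)) := by
  unfold SProdOn symMonomial
  rw [sort_eq_ofFn, List.map_ofFn]
  rfl

lemma UProdOn_eq_ofFn {U : Type*} [Ring U] (j : L → U) {n : ℕ} (X : Fin n → L)
    (s : Finset (Fin n)) :
    UProdOn j X s = (List.ofFn fun i : Fin s.card => j (X (s.orderEmbOfFin rfl i))).prod := by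
  unfold UProdOn
  rw [sort_eq_ofFn, List.map_ofFn]
  rfl

end Final


theorem pbw_coalgebra_morphism
    {A L U : Type*} [CommRing A] [Algebra ℚ A]
    [AddCommGroup L] [Module A L]
    [Ring U] [Algebra ℚ U] [Module A U]
    (ι : A →+* U) (j : L → U) (ρ : L → A → A) (nab : L → L → L)
    (hAU : ∀ (a : A) (u : U), a • u = ι a * u)
    (hj_add : ∀ X Y : L, j (X + Y) = j X + j Y)
    (hj_smul : ∀ (a : A) (X : L), j (a • X) = ι a * j X)
    (hcomm : ∀ (X : L) (a : A), j X * ι a = ι a * j X + ι (ρ X a))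
    (pbw : SymmAlgebra A L →ₗ[A] U)
    (hpbw : ∀ (n : ℕ) (X : Fin n → L), pbw (symMonomial A n X) = EMap j nab n X)
    -- the comultiplication on `U(L)`: `Δ(1) = 1⊗1`, `Δ(X) = 1⊗X + X⊗1`, and the
    -- induced shuffle formula on monomials
    (ΔU : U →ₗ[A] U ⊗[A] U)
    (hΔU1 : ΔU 1 = 1 ⊗ₜ[A] 1)
    (hΔUX : ∀ X : L, ΔU (j X) = 1 ⊗ₜ[A] j X + j X ⊗ₜ[A] 1)
    (hΔUprod : ∀ (n : ℕ) (X : Fin n → L),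
        ΔU ((List.ofFn fun i => j (X i)).prod) =
          ∑ s : Finset (Fin n), UProdOn j X s ⊗ₜ[A] UProdOn j X sᶜ)
    -- the shuffle comultiplication on `S_A(L)`
    (ΔS : SymmAlgebra A L →ₗ[A] SymmAlgebra A L ⊗[A] SymmAlgebra A L)
    (hΔSprod : ∀ (n : ℕ) (X : Fin n → L),
        ΔS (symMonomial A n X) =
          ∑ s : Finset (Fin n), SProdOn A X s ⊗ₜ[A] SProdOn A X sᶜ) :
    ΔU.comp pbw = (TensorProduct.map pbw pbw).comp ΔS := by
  letI inst1 : SMulCommClass ℚ A U :=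
    ⟨fun q a u => by rw [hAU, hAU, mul_smul_comm]⟩
  letI inst2 : SMulCommClass A ℚ U := SMulCommClass.symm ℚ A U
  apply LinearMap.ext_on (span_symMonomial (A := A) (L := L))
  rintro x ⟨n, X, rfl⟩
  simp only [LinearMap.coe_comp, Function.comp_apply]
  rw [hpbw n X, hΔSprod n X, map_sum]
  simp only [TensorProduct.map_tmul]
  -- LHS via the key lemma
  have hUniv : EMap j nab n X = ElF j nab X Finset.univ := by
    have h := ElF_eq j nab X Finset.univ (by simp) id strictMono_id
      (fun i => Finset.mem_univ i)
    simpa using h.symm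
  have hkey := key j nab ΔU hΔUprod n X Finset.univ (by simp) 0 Fin.elim0
  have h0 : (List.ofFn fun i : Fin 0 => j (Fin.elim0 i)).prod = 1 := by simp
  rw [h0, one_mul] at hkey
  rw [hUniv, hkey]
  -- collapse the sum over `Finset (Fin 0)`
  have hUP : ∀ t : Finset (Fin 0), UProdOn j Fin.elim0 t = 1 := by
    intro t
    have : t = ∅ := Finset.eq_empty_of_isEmpty t
    subst this
    unfold UProdOn
    rw [Finset.sort_empty]
    rfl
  have hcollapse : (∑ t : Finset (Fin 0), ∑ s ∈ Finset.univ.powerset,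
      (UProdOn j Fin.elim0 t * ElF j nab X s) ⊗ₜ[A]
        (UProdOn j Fin.elim0 tᶜ * ElF j nab X (Finset.univ \ s))) =
      ∑ s ∈ Finset.univ.powerset,
        ElF j nab X s ⊗ₜ[A] ElF j nab X (Finset.univ \ s) := by
    have hone : ∀ t : Finset (Fin 0), (∑ s ∈ Finset.univ.powerset,
        (UProdOn j Fin.elim0 t * ElF j nab X s) ⊗ₜ[A]
          (UProdOn j Fin.elim0 tᶜ * ElF j nab X (Finset.univ \ s))) =
        ∑ s ∈ Finset.univ.powerset,
          ElF j nab X s ⊗ₜ[A] ElF j nab X (Finset.univ \ s) := by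
      intro t
      rw [hUP t, hUP tᶜ]
      simp only [one_mul]
    rw [Finset.sum_congr rfl (fun t _ => hone t), Finset.sum_const, Finset.card_univ]
    rw [show Fintype.card (Finset (Fin 0)) = 1 by
      rw [Fintype.card_finset]; simp]
    rw [one_smul]
  rw [hcollapse, Finset.powerset_univ]
  refine Finset.sum_congr rfl ?_
  intro s _
  have hS : ∀ u : Finset (Fin n), pbw (SProdOn A X u) = ElF j nab X u := by
    intro u
    rw [SProdOn_eq_symMonomial, hpbw]
    rfl
  rw [hS s, hS sᶜ, ← Finset.compl_eq_univ_sdiff]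

end
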